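/- Let q ≥ 1 and n₁,…,n_q be positive integers, and let P be the polynomial ring over 𝔽₂ = ℤ/2 in the indeterminates β_i^{(p)} for 1 ≤ p ≤ q and 1 ≤ i ≤ ⌊n_p/2⌋. With the conventions β_0^{(p)} := 1, β_i^{(p)} := β_{n_p−i}^{(p)} for ⌊n_p/2⌋ < i ≤ n_p, and β_i^{(p)} := 0 for i < 0 or i > n_p, define μ_m := Σ_{a₁+⋯+a_q = m} β_{a₁}^{(1)}⋯β_{a_q}^{(q)} and μ̃_m := μ_m + (binom(n₁+⋯+n_q, m) mod 2). Set h := ⌊n₁/2⌋ + ⋯ + ⌊n_q/2⌋ and N := n₁ + ⋯ + n_q. Then for every m with h < m ≤ ⌊N/2⌋, the element μ_m is an 𝔽₂-linear combination of μ₀, μ₁,…, μ_h, and μ̃_m is an 𝔽₂-linear combination of μ̃₁,…, μ̃_h. -/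

import Mathlib

open MvPolynomial

/-- A sequence (given as a list) `a₁, …, aₙ` in a commutative ring `A` is `A`-regular if for
each `i`, `aᵢ` is not a zero divisor on `A ⧸ (a₁, …, a_{i-1})`. -/
def IsRegularSeq {A : Type*} [CommRing A] (l : List A) : Prop :=
  ∀ (i : ℕ) (h : i < l.length), ∀ x : A,
    l.get ⟨i, h⟩ * x ∈ Ideal.span {y | y ∈ l.take i} →
      x ∈ Ideal.span {y | y ∈ l.take i}

/-- The element `β_i^{(p)}` of the polynomial ring `P` over `𝔽₂` in the indeterminates
`β_i^{(p)}`, `1 ≤ p ≤ q`, `1 ≤ i ≤ ⌊n_p/2⌋`, with the conventions `β_0^{(p)} = 1`,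
`β_i^{(p)} = β_{n_p−i}^{(p)}` for `⌊n_p/2⌋ < i ≤ n_p`, and `β_i^{(p)} = 0` for `i > n_p`. -/
noncomputable def bb (q : ℕ) (n : Fin q → ℕ) (p : Fin q) (i : ℕ) :
    MvPolynomial (Σ p : Fin q, Fin (n p / 2)) (ZMod 2) :=
  if h : i ≤ n p then
    (if h1 : 1 ≤ min i (n p - i) then X ⟨p, ⟨min i (n p - i) - 1, by omega⟩⟩ else 1)
  else 0

/-- `μ_m := Σ_{a₁+⋯+a_q = m} β_{a₁}^{(1)} ⋯ β_{a_q}^{(q)}`. -/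
noncomputable def muP (q : ℕ) (n : Fin q → ℕ) (m : ℕ) :
    MvPolynomial (Σ p : Fin q, Fin (n p / 2)) (ZMod 2) :=
  ∑ a ∈ (Fintype.piFinset fun _ : Fin q => Finset.range (m + 1)).filter
      (fun a => ∑ p, a p = m),
    ∏ p, bb q n p (a p)

/-- `μ̃_m := μ_m + (binom(n₁+⋯+n_q, m) mod 2)`. -/
noncomputable def muTildeP (q : ℕ) (n : Fin q → ℕ) (m : ℕ) :
    MvPolynomial (Σ p : Fin q, Fin (n p / 2)) (ZMod 2) :=
  muP q n m + (Nat.choose (∑ p, n p) m : MvPolynomial (Σ p : Fin q, Fin (n p / 2)) (ZMod 2))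

local notation "Y" => Polynomial.X


/-- Multiplying by `(1+Y)^2` shifts the palindromic span set. -/
lemma aux_mul_sq_span {R : Type*} [CommRing R] (nn : ℕ) {y : Polynomial R}
    (hy : y ∈ Submodule.span R
      {w : Polynomial R | ∃ k, 2 * k ≤ nn ∧ w = Y ^ k * (1 + Y) ^ (nn - 2 * k)}) :
    (1 + Y) ^ 2 * y ∈ Submodule.span R
      {w : Polynomial R | ∃ k, 2 * k ≤ nn + 2 ∧ w = Y ^ k * (1 + Y) ^ (nn + 2 - 2 * k)} := by
  induction hy using Submodule.span_induction with
  | mem w hw =>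
    obtain ⟨k, hk, rfl⟩ := hw
    apply Submodule.subset_span
    refine ⟨k, by omega, ?_⟩
    rw [show nn + 2 - 2 * k = (nn - 2 * k) + 2 by omega]
    ring
  | zero => simp
  | add x y hx hy hx' hy' => rw [mul_add]; exact add_mem hx' hy'
  | smul r x hx hx' => rw [mul_smul_comm]; exact Submodule.smul_mem _ _ hx'

lemma aux_pal_mem_span {R : Type*} [CommRing R] (h2 : (2 : Polynomial R) = 0) :
    ∀ d j nn : ℕ, nn = 2 * j + d →
    ((Y : Polynomial R) ^ j * (1 + Y ^ d)) ∈
      Submodule.span R {w : Polynomial R | ∃ k, 2 * k ≤ nn ∧ w = Y ^ k * (1 + Y) ^ (nn - 2 * k)} := by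
  intro d
  induction d using Nat.strong_induction_on with
  | _ d IH =>
    match d with
    | 0 =>
      intro j nn h
      have : ((Y : Polynomial R) ^ j * (1 + Y ^ 0)) = 0 := by
        linear_combination (Polynomial.X : Polynomial R) ^ j * h2
      rw [this]; exact zero_mem _
    | 1 =>
      intro j nn h
      apply Submodule.subset_span
      refine ⟨j, by omega, ?_⟩
      rw [show nn - 2 * j = 1 by omega]
      ring
    | 2 =>
      intro j nn h
      have he : ((Y : Polynomial R) ^ j * (1 + Y ^ 2)) = Y ^ j * (1 + Y) ^ 2 := by
        linear_combination (-((Polynomial.X : Polynomial R) ^ (j + 1))) * h2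
      rw [he]
      apply Submodule.subset_span
      exact ⟨j, by omega, by rw [show nn - 2 * j = 2 by omega]⟩
    | 3 =>
      intro j nn h
      have he : ((Y : Polynomial R) ^ j * (1 + Y ^ 3)) =
          Y ^ j * (1 + Y) ^ 3 + Y ^ (j + 1) * (1 + Y) ^ 1 := by
        linear_combination (-2 * (Polynomial.X : Polynomial R) ^ (j + 1)
          - 2 * (Polynomial.X : Polynomial R) ^ (j + 2)) * h2
      rw [he]
      apply add_mem
      · exact Submodule.subset_span ⟨j, by omega, by rw [show nn - 2 * j = 3 by omega]⟩
      · exact Submodule.subset_span ⟨j + 1, by omega, by rw [show nn - 2 * (j+1) = 1 by omega]⟩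
    | (e + 4) =>
      intro j nn h
      have he : ((Y : Polynomial R) ^ j * (1 + Y ^ (e + 4))) =
          (1 + Y) ^ 2 * (Y ^ j * (1 + Y ^ (e + 2))) + Y ^ (j + 2) * (1 + Y ^ e) := by
        linear_combination (-((Polynomial.X : Polynomial R) ^ (j + 1))
          - (Polynomial.X : Polynomial R) ^ (j + 2)
          - (Polynomial.X : Polynomial R) ^ (j + e + 2)
          - (Polynomial.X : Polynomial R) ^ (j + e + 3)) * h2
      rw [he]
      apply add_mem
      · have h1 := IH (e + 2) (by omega) j (nn - 2) (by omega)
        have := aux_mul_sq_span (nn - 2) h1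
        rwa [show nn - 2 + 2 = nn by omega] at this
      · exact IH e (by omega) (j + 2) nn (by omega)


variable {q : ℕ} {n : Fin q → ℕ}

lemma bb_zero (p : Fin q) : bb q n p 0 = 1 := by
  unfold bb
  rw [dif_pos (Nat.zero_le _)]
  rw [dif_neg (by simp)]

lemma bb_eq_of_min_eq (p : Fin q) {i i' : ℕ} (hi : i ≤ n p) (hi' : i' ≤ n p)
    (hmin : min i (n p - i) = min i' (n p - i')) : bb q n p i = bb q n p i' := by
  unfold bb
  rw [dif_pos hi, dif_pos hi']
  simp only [hmin]

lemma bb_symm (p : Fin q) {i : ℕ} (hi : i ≤ n p) : bb q n p (n p - i) = bb q n p i := by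
  apply bb_eq_of_min_eq p (Nat.sub_le _ _) hi
  omega

lemma bb_of_gt (p : Fin q) {i : ℕ} (hi : n p < i) : bb q n p i = 0 := by
  unfold bb
  rw [dif_neg (by omega)]

noncomputable def fpol (q : ℕ) (n : Fin q → ℕ) (p : Fin q) :
    Polynomial (MvPolynomial (Σ p : Fin q, Fin (n p / 2)) (ZMod 2)) :=
  ∑ k ∈ (Finset.range (n p + 1)).filter (fun k => 2 * k ≤ n p),
    Polynomial.C (bb q n p k) * (if 2 * k = n p then Y ^ k else Y ^ k + Y ^ (n p - k))

lemma term_coeff (p : Fin q) (k j : ℕ) (hk : 2 * k ≤ n p) :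
    (Polynomial.C (bb q n p k) *
      (if 2 * k = n p then (Y : Polynomial (MvPolynomial (Σ p : Fin q, Fin (n p / 2)) (ZMod 2))) ^ k
        else Y ^ k + Y ^ (n p - k))).coeff j =
      if j = k ∨ (j = n p - k ∧ 2 * k ≠ n p) then bb q n p k else 0 := by
  by_cases hmid : 2 * k = n p
  · rw [if_pos hmid, Polynomial.coeff_C_mul, Polynomial.coeff_X_pow]
    by_cases hj : j = k
    · rw [if_pos hj, if_pos (Or.inl hj), mul_one]
    · rw [if_neg hj, if_neg (by tauto), mul_zero]
  · rw [if_neg hmid, Polynomial.coeff_C_mul, Polynomial.coeff_add, Polynomial.coeff_X_pow,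
      Polynomial.coeff_X_pow]
    by_cases hj : j = k
    · have hj2 : ¬ (j = n p - k) := by omega
      rw [if_pos hj, if_neg hj2, if_pos (Or.inl hj)]; ring
    · by_cases hj2 : j = n p - k
      · rw [if_neg hj, if_pos hj2, if_pos (Or.inr ⟨hj2, hmid⟩)]; ring
      · rw [if_neg hj, if_neg hj2, if_neg (by tauto)]; ring

lemma fpol_coeff (p : Fin q) (j : ℕ) : (fpol q n p).coeff j = bb q n p j := by
  unfold fpol
  rw [Polynomial.finset_sum_coeff]
  rw [Finset.sum_congr rfl (fun k hk => term_coeff p k j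
    (by simp only [Finset.mem_filter] at hk; exact hk.2))]
  by_cases hj : j ≤ n p
  · have hminl : min j (n p - j) ≤ j := by omega
    have hminr : min j (n p - j) ≤ n p - j := by omega
    have hmine : min j (n p - j) = j ∨ min j (n p - j) = n p - j := by omega
    set k0 := min j (n p - j) with hk0
    clear_value k0
    rw [Finset.sum_eq_single_of_mem k0
      (by simp only [Finset.mem_filter, Finset.mem_range]; omega)]
    · rw [if_pos (by omega)]
      rcases Nat.le_total (2 * j) (n p) with h | h
      · have : k0 = j := by omega
        rw [this]
      · have : k0 = n p - j := by omega
        rw [this, bb_symm p hj]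
    · intro k hk hne
      simp only [Finset.mem_filter, Finset.mem_range] at hk
      rw [if_neg (by omega)]
  · rw [bb_of_gt p (by omega)]
    apply Finset.sum_eq_zero
    intro k hk
    simp only [Finset.mem_filter, Finset.mem_range] at hk
    rw [if_neg (by omega)]

local notation "PP" => MvPolynomial ((_ : Fin q) × Fin (n _ / 2)) (ZMod 2)

lemma two_eq_zero' : (2 : Polynomial (MvPolynomial (Σ p : Fin q, Fin (n p / 2)) (ZMod 2))) = 0 := by
  have : (2 : ℕ) = 2 := rfl
  exact_mod_cast CharP.cast_eq_zero (Polynomial (MvPolynomial (Σ p : Fin q, Fin (n p / 2)) (ZMod 2))) 2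

lemma fpol_mem_span (p : Fin q) :
    fpol q n p ∈ Submodule.span (MvPolynomial (Σ p : Fin q, Fin (n p / 2)) (ZMod 2))
      {w | ∃ k, 2 * k ≤ n p ∧ w = Y ^ k * (1 + Y) ^ (n p - 2 * k)} := by
  unfold fpol
  apply Submodule.sum_mem
  intro k hk
  simp only [Finset.mem_filter, Finset.mem_range] at hk
  rw [← Polynomial.smul_eq_C_mul]
  apply Submodule.smul_mem
  by_cases hmid : 2 * k = n p
  · rw [if_pos hmid]
    apply Submodule.subset_span
    exact ⟨k, hk.2, by rw [show n p - 2 * k = 0 by omega, pow_zero, mul_one]⟩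
  · rw [if_neg hmid]
    have he : (Y ^ k + Y ^ (n p - k) :
        Polynomial (MvPolynomial (Σ p : Fin q, Fin (n p / 2)) (ZMod 2))) =
        Y ^ k * (1 + Y ^ (n p - 2 * k)) := by
      rw [mul_add, mul_one, ← pow_add, show k + (n p - 2 * k) = n p - k by omega]
    rw [he]
    exact aux_pal_mem_span two_eq_zero' (n p - 2 * k) k (n p) (by omega)

lemma prod_fpol_mem_span (s : Finset (Fin q)) :
    (∏ p ∈ s, fpol q n p) ∈
      Submodule.span (MvPolynomial (Σ p : Fin q, Fin (n p / 2)) (ZMod 2))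
      {w | ∃ K, K ≤ ∑ p ∈ s, n p / 2 ∧ w = Y ^ K * (1 + Y) ^ ((∑ p ∈ s, n p) - 2 * K)} := by
  induction s using Finset.induction_on with
  | empty =>
    simp only [Finset.prod_empty, Finset.sum_empty]
    exact Submodule.subset_span ⟨0, le_refl _, by simp⟩
  | @insert a s' ha IH =>
    rw [Finset.prod_insert ha]
    have h1 := fpol_mem_span (n := n) a
    have hmul := Submodule.mul_mem_mul h1 IH
    rw [Submodule.span_mul_span] at hmul
    refine Submodule.span_le.mpr ?_ hmul
    rintro w hw
    rw [Set.mem_mul] at hw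
    obtain ⟨x, hx, y, hy, rfl⟩ := hw
    obtain ⟨k, hk, rfl⟩ := hx
    obtain ⟨K, hK, rfl⟩ := hy
    have hsum : 2 * K ≤ ∑ p ∈ s', n p := by
      calc 2 * K ≤ 2 * ∑ p ∈ s', n p / 2 := by omega
      _ = ∑ p ∈ s', 2 * (n p / 2) := by rw [Finset.mul_sum]
      _ ≤ ∑ p ∈ s', n p := Finset.sum_le_sum (fun p _ => by omega)
    apply Submodule.subset_span
    refine ⟨k + K, by rw [Finset.sum_insert ha]; omega, ?_⟩
    rw [Finset.sum_insert ha,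
      show n a + ∑ p ∈ s', n p - 2 * (k + K) = (n a - 2 * k) + ((∑ p ∈ s', n p) - 2 * K) by omega,
      pow_add, pow_add]
    ring

lemma muP_eq_coeff (m : ℕ) : muP q n m = (∏ p, fpol q n p).coeff m := by
  rw [← Polynomial.coeff_coe]
  rw [show ((↑(∏ p, fpol q n p) :
      PowerSeries (MvPolynomial (Σ p : Fin q, Fin (n p / 2)) (ZMod 2)))) =
      ∏ p, (↑(fpol q n p) : PowerSeries (MvPolynomial (Σ p : Fin q, Fin (n p / 2)) (ZMod 2))) by
    rw [← Polynomial.coeToPowerSeries.ringHom_apply, map_prod]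
    simp [Polynomial.coeToPowerSeries.ringHom_apply]]
  rw [PowerSeries.coeff_prod]
  unfold muP
  apply Finset.sum_nbij' (i := fun a => Finsupp.equivFunOnFinite.symm a) (j := fun l => ⇑l)
  · intro a ha
    simp only [Finset.mem_filter, Fintype.mem_piFinset, Finset.mem_range] at ha
    rw [Finset.mem_finsuppAntidiag]
    refine ⟨?_, Finset.subset_univ _⟩
    simpa using ha.2
  · intro l hl
    rw [Finset.mem_finsuppAntidiag] at hl
    simp only [Finset.mem_filter, Fintype.mem_piFinset, Finset.mem_range]
    have hsum : ∑ p, l p = m := hl.1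
    refine ⟨fun p => ?_, hsum⟩
    have : l p ≤ ∑ p, l p := Finset.single_le_sum (fun _ _ => Nat.zero_le _) (Finset.mem_univ p)
    omega
  · intro a ha
    exact funext fun p => by simp [Finsupp.equivFunOnFinite]; rfl
  · intro l hl
    exact Finsupp.equivFunOnFinite_symm_coe l
  · intro a ha
    apply Finset.prod_congr rfl
    intro p _
    rw [Polynomial.coeff_coe, fpol_coeff]
    congr 1

lemma muP_zero : muP q n 0 = 1 := by
  unfold muP
  have hset : (Fintype.piFinset fun _ : Fin q => Finset.range (0 + 1)).filter
      (fun a => ∑ p, a p = 0) = {fun _ => 0} := by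
    ext a
    simp only [Finset.mem_filter, Fintype.mem_piFinset, Finset.mem_range, Nat.lt_one_iff,
      Finset.mem_singleton]
    constructor
    · rintro ⟨h1, _⟩; funext p; exact Nat.lt_one_iff.mp (h1 p)
    · rintro rfl; simp
  rw [hset, Finset.sum_singleton]
  simp [bb_zero]

lemma tri {M : Type*} [AddCommGroup M] [Module (ZMod 2) M] (s h : ℕ)
    (cc : ℕ → ℕ → ZMod 2) (r μf : ℕ → M) (SS : Set M)
    (hkey : ∀ j, μf j = ∑ K ∈ Finset.Icc s h, cc j K • r K)
    (hzero : ∀ j K, j < K → cc j K = 0)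
    (hdiag : ∀ K, cc K K = 1)
    (hmu : ∀ i, s ≤ i → i ≤ h → μf i ∈ SS) :
    ∀ K, s ≤ K → K ≤ h → r K ∈ Submodule.span (ZMod 2) SS := by
  intro K
  induction K using Nat.strong_induction_on with
  | _ K IH =>
    intro hsK hKh
    have heq : μf K = (∑ K' ∈ Finset.Ico s K, cc K K' • r K') + r K := by
      rw [hkey K, show Finset.Icc s h = Finset.Ico s (h + 1) by rw [Finset.Ico_add_one_right_eq_Icc]]
      rw [← Finset.sum_subset (Finset.Ico_subset_Ico (le_refl s) (by omega : K + 1 ≤ h + 1))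
        (fun x hx hnx => by
          have : K < x := by
            simp only [Finset.mem_Ico] at hx hnx; omega
          rw [hzero K x this, zero_smul])]
      rw [Finset.sum_Ico_succ_top hsK, hdiag K, one_smul]
    have hrK : r K = μf K - ∑ K' ∈ Finset.Ico s K, cc K K' • r K' := by
      rw [heq]; abel
    rw [hrK]
    apply sub_mem (Submodule.subset_span (hmu K hsK hKh))
    apply Submodule.sum_mem
    intro K' hK'
    rw [Finset.mem_Ico] at hK'
    exact Submodule.smul_mem _ _ (IH K' hK'.2 hK'.1 (by omega))

theorem stmt_11' (q : ℕ) (hq : 1 ≤ q) (n : Fin q → ℕ) (hn : ∀ p, 1 ≤ n p)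
    (m : ℕ) (hm1 : ∑ p, n p / 2 < m) (hm2 : m ≤ (∑ p, n p) / 2) :
    muP q n m ∈
      Submodule.span (ZMod 2) {x | ∃ i, i ≤ ∑ p, n p / 2 ∧ x = muP q n i} ∧
    muTildeP q n m ∈
      Submodule.span (ZMod 2) {x | ∃ i, 1 ≤ i ∧ i ≤ ∑ p, n p / 2 ∧ x = muTildeP q n i} := by
  classical
  set N := ∑ p, n p with hN
  set h := ∑ p, n p / 2 with hh
  set v : ℕ → Polynomial (MvPolynomial (Σ p : Fin q, Fin (n p / 2)) (ZMod 2)) :=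
    fun K => Y ^ K * (1 + Y) ^ (N - 2 * K) with hv
  have hmem := prod_fpol_mem_span (n := n) Finset.univ
  have hseteq : {w : Polynomial (MvPolynomial (Σ p : Fin q, Fin (n p / 2)) (ZMod 2)) |
      ∃ K, K ≤ ∑ p, n p / 2 ∧ w = Y ^ K * (1 + Y) ^ ((∑ p, n p) - 2 * K)} =
      v '' {K | K ≤ h} := by
    ext w
    constructor
    · rintro ⟨K, hK, rfl⟩; exact ⟨K, hK, rfl⟩
    · rintro ⟨K, hK, rfl⟩; exact ⟨K, hK, rfl⟩
  rw [hseteq] at hmem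
  rw [Finsupp.mem_span_image_iff_linearCombination] at hmem
  obtain ⟨l, hl, hF⟩ := hmem
  rw [Finsupp.mem_supported] at hl
  have hFsum : (∏ p, fpol q n p) = ∑ K ∈ Finset.Icc 0 h, l K • v K := by
    rw [← hF, Finsupp.linearCombination_apply, Finsupp.sum]
    apply Finset.sum_subset
    · intro K hK
      rw [Finset.mem_Icc]
      exact ⟨Nat.zero_le _, hl hK⟩
    · intro K _ hK
      rw [Finsupp.notMem_support_iff.mp hK, zero_smul]
  set cc : ℕ → ℕ → ZMod 2 :=
    fun j K => if K ≤ j then ((N - 2 * K).choose (j - K) : ZMod 2) else 0 with hcc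
  have key : ∀ j, muP q n j = ∑ K ∈ Finset.Icc 0 h, cc j K • l K := by
    intro j
    rw [muP_eq_coeff j, hFsum, Polynomial.finset_sum_coeff]
    apply Finset.sum_congr rfl
    intro K _
    rw [Polynomial.coeff_smul, hv]
    rw [Polynomial.coeff_X_pow_mul', Polynomial.coeff_one_add_X_pow]
    by_cases hKj : K ≤ j
    · rw [if_pos hKj, hcc]
      simp only [if_pos hKj]
      rw [MvPolynomial.smul_eq_C_mul, map_natCast, smul_eq_mul, mul_comm]
    · rw [if_neg hKj, hcc]
      simp only [if_neg hKj]
      rw [smul_eq_mul, mul_zero, zero_smul]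
  have hzero : ∀ j K, j < K → cc j K = 0 := by
    intro j K hjK
    rw [hcc]
    simp only
    rw [if_neg (by omega)]
  have hdiag : ∀ K, cc K K = 1 := by
    intro K
    rw [hcc]
    simp only [if_pos (le_refl K), Nat.sub_self, Nat.choose_zero_right, Nat.cast_one]
  have hrmem : ∀ K, 0 ≤ K → K ≤ h → l K ∈ Submodule.span (ZMod 2)
      {x | ∃ i, i ≤ ∑ p, n p / 2 ∧ x = muP q n i} :=
    tri 0 h cc (fun K => l K) (muP q n) _ key hzero hdiag
      (fun i _ hi => ⟨i, hi, rfl⟩)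
  constructor
  · rw [key m]
    apply Submodule.sum_mem
    intro K hK
    rw [Finset.mem_Icc] at hK
    exact Submodule.smul_mem _ _ (hrmem K hK.1 hK.2)
  · have hl0 : l 0 = 1 := by
      have h0 := key 0
      rw [muP_zero] at h0
      rw [Finset.sum_eq_single_of_mem 0 (Finset.mem_Icc.mpr ⟨le_refl 0, Nat.zero_le h⟩)
        (fun K _ hK0 => by rw [hzero 0 K (by omega), zero_smul])] at h0
      rw [hdiag 0, one_smul] at h0
      exact h0.symm
    have key' : ∀ j, muTildeP q n j = ∑ K ∈ Finset.Icc 1 h, cc j K • l K := by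
      intro j
      have hsplit : Finset.Icc 0 h = insert 0 (Finset.Icc 1 h) := by
        ext x
        simp only [Finset.mem_Icc, Finset.mem_insert]
        omega
      have hj := key j
      rw [hsplit, Finset.sum_insert (by simp)] at hj
      unfold muTildeP
      rw [hj, hl0]
      have hc : cc j 0 • (1 : MvPolynomial (Σ p : Fin q, Fin (n p / 2)) (ZMod 2)) =
          ((N.choose j : ℕ) : MvPolynomial (Σ p : Fin q, Fin (n p / 2)) (ZMod 2)) := by
        rw [hcc]
        simp only [if_pos (Nat.zero_le j), Nat.mul_zero, Nat.sub_zero]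
        rw [MvPolynomial.smul_eq_C_mul, mul_one, map_natCast]
      rw [hc, add_right_comm, CharTwo.add_self_eq_zero, zero_add]
    have hrmem' : ∀ K, 1 ≤ K → K ≤ h → l K ∈ Submodule.span (ZMod 2)
        {x | ∃ i, 1 ≤ i ∧ i ≤ ∑ p, n p / 2 ∧ x = muTildeP q n i} :=
      tri 1 h cc (fun K => l K) (muTildeP q n) _ key' hzero hdiag
        (fun i h1 hi => ⟨i, h1, hi, rfl⟩)
    rw [key' m]
    apply Submodule.sum_mem
    intro K hK
    rw [Finset.mem_Icc] at hK
    exact Submodule.smul_mem _ _ (hrmem' K hK.1 hK.2)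

/-- For `h < m ≤ ⌊N/2⌋` (`h = ⌊n₁/2⌋ + ⋯ + ⌊n_q/2⌋`, `N = n₁ + ⋯ + n_q`), `μ_m` is an
`𝔽₂`-linear combination of `μ₀, …, μ_h`, and `μ̃_m` is an `𝔽₂`-linear combination of
`μ̃₁, …, μ̃_h`. -/
theorem stmt_11 (q : ℕ) (hq : 1 ≤ q) (n : Fin q → ℕ) (hn : ∀ p, 1 ≤ n p)
    (m : ℕ) (hm1 : ∑ p, n p / 2 < m) (hm2 : m ≤ (∑ p, n p) / 2) :
    muP q n m ∈
      Submodule.span (ZMod 2) {x | ∃ i, i ≤ ∑ p, n p / 2 ∧ x = muP q n i} ∧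
    muTildeP q n m ∈
      Submodule.span (ZMod 2) {x | ∃ i, 1 ≤ i ∧ i ≤ ∑ p, n p / 2 ∧ x = muTildeP q n i} := by
  exact stmt_11' q hq n hn m hm1 hm2
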